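/- Let g : ℝ^p → ℝ^q be differentiable with derivative Dg Lipschitz of constant L ≥ 0 (in operator norm). Let θ_0, …, θ_t be nonnegative reals with ∑_{j=0}^t θ_j = 1, points z_0, …, z_t ∈ ℝ^p with x̄ = ∑_{j=0}^t θ_j z_j, and arbitrary vectors u_0, …, u_t ∈ ℝ^q with y = ∑_{j=0}^t θ_j u_j. Then ‖g(x̄) − y‖² ≤ (L²/2) (∑_{j=0}^t θ_j ‖z_j − x̄‖²)² + 2 ‖∑_{j=0}^t θ_j (u_j − g(z_j))‖². -/

import Mathlib

lemma taylor_aux {E F : Type*} [NormedAddCommGroup E] [NormedSpace ℝ E]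
    [NormedAddCommGroup F] [NormedSpace ℝ F] [CompleteSpace F] {L : ℝ} (hL : 0 ≤ L)
    {g : E → F} (hg : Differentiable ℝ g)
    (hLip : ∀ x y : E, ‖fderiv ℝ g x - fderiv ℝ g y‖ ≤ L * ‖x - y‖)
    (a b : E) : ‖g b - g a - fderiv ℝ g a (b - a)‖ ≤ L / 2 * ‖b - a‖ ^ 2 := by
  set v := b - a with hv
  have hcontD : Continuous (fun x => fderiv ℝ g x) :=
    (LipschitzWith.of_dist_le_mul (K := ⟨L, hL⟩)
      (fun x y => by rw [dist_eq_norm, dist_eq_norm]; exact hLip x y)).continuous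
  set φ : ℝ → F := fun t => g (a + t • v) - t • (fderiv ℝ g a v) with hφdef
  have hφ : ∀ s : ℝ, HasDerivAt φ ((fderiv ℝ g (a + s • v) - fderiv ℝ g a) v) s := by
    intro s
    have h1 : HasDerivAt (fun s : ℝ => a + s • v) v s := by
      simpa using ((hasDerivAt_id s).smul_const v).const_add a
    have h2 : HasDerivAt (fun s : ℝ => g (a + s • v)) (fderiv ℝ g (a + s • v) v) s :=
      (hg _).hasFDerivAt.comp_hasDerivAt s h1
    have h3 : HasDerivAt (fun s : ℝ => s • (fderiv ℝ g a v)) (fderiv ℝ g a v) s := by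
      simpa using (hasDerivAt_id s).smul_const (fderiv ℝ g a v)
    simp only [ContinuousLinearMap.sub_apply]; exact h2.sub h3
  have hcont : Continuous fun s : ℝ => (fderiv ℝ g (a + s • v) - fderiv ℝ g a) v := by
    apply Continuous.clm_apply _ continuous_const
    exact (hcontD.comp (continuous_const.add (continuous_id.smul continuous_const))).sub
      continuous_const
  have hFTC : φ 1 - φ 0 = ∫ s in (0:ℝ)..1, (fderiv ℝ g (a + s • v) - fderiv ℝ g a) v :=
    (intervalIntegral.integral_eq_sub_of_hasDerivAt (fun s _ => hφ s)
      (hcont.intervalIntegrable 0 1)).symm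
  have heq : φ 1 - φ 0 = g b - g a - fderiv ℝ g a (b - a) := by
    simp [φ, hv]; abel
  have hbound : ‖∫ s in (0:ℝ)..1, (fderiv ℝ g (a + s • v) - fderiv ℝ g a) v‖
      ≤ |∫ s in (0:ℝ)..1, L * s * ‖v‖ ^ 2| := by
    apply intervalIntegral.norm_integral_le_abs_of_norm_le
    · filter_upwards [MeasureTheory.ae_restrict_mem measurableSet_Ioc] with s hs
      rw [Set.uIoc_of_le (by norm_num)] at hs
      calc ‖(fderiv ℝ g (a + s • v) - fderiv ℝ g a) v‖
          ≤ ‖fderiv ℝ g (a + s • v) - fderiv ℝ g a‖ * ‖v‖ :=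
            (fderiv ℝ g (a + s • v) - fderiv ℝ g a).le_opNorm v
        _ ≤ (L * ‖a + s • v - a‖) * ‖v‖ := by
            exact mul_le_mul_of_nonneg_right (hLip _ _) (norm_nonneg _)
        _ = L * s * ‖v‖ ^ 2 := by
            rw [add_sub_cancel_left, norm_smul, Real.norm_eq_abs, abs_of_pos hs.1]; ring
    · apply Continuous.intervalIntegrable; continuity
  have hint : (∫ s in (0:ℝ)..1, L * s * ‖v‖ ^ 2) = L / 2 * ‖v‖ ^ 2 := by
    have : (fun s : ℝ => L * s * ‖v‖ ^ 2) = fun s : ℝ => (L * ‖v‖ ^ 2) * s := by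
      funext s; ring
    rw [this, intervalIntegral.integral_const_mul, integral_id]
    ring
  calc ‖g b - g a - fderiv ℝ g a (b - a)‖ = ‖φ 1 - φ 0‖ := by rw [heq]
    _ ≤ L / 2 * ‖v‖ ^ 2 := by
        rw [hFTC]
        refine hbound.trans ?_
        rw [hint, abs_of_nonneg (by positivity)]


/-- Central deterministic inequality in the proof of Lemma 2: the squared tracking error
between `g` at a convex combination of points and a convex combination of estimates. -/
theorem stmt_5 (p q : ℕ) (L : ℝ) (hL : 0 ≤ L)
    (g : EuclideanSpace ℝ (Fin p) → EuclideanSpace ℝ (Fin q))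
    (hg : Differentiable ℝ g)
    (hLip : ∀ x y : EuclideanSpace ℝ (Fin p),
      ‖fderiv ℝ g x - fderiv ℝ g y‖ ≤ L * ‖x - y‖)
    (t : ℕ) (θ : ℕ → ℝ) (hθ : ∀ j ∈ Finset.range (t + 1), 0 ≤ θ j)
    (hsum : ∑ j ∈ Finset.range (t + 1), θ j = 1)
    (z : ℕ → EuclideanSpace ℝ (Fin p)) (u : ℕ → EuclideanSpace ℝ (Fin q))
    (xbar : EuclideanSpace ℝ (Fin p))
    (hxbar : xbar = ∑ j ∈ Finset.range (t + 1), θ j • z j)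
    (y : EuclideanSpace ℝ (Fin q))
    (hy : y = ∑ j ∈ Finset.range (t + 1), θ j • u j) :
    ‖g xbar - y‖ ^ 2 ≤
      (L ^ 2 / 2) * (∑ j ∈ Finset.range (t + 1), θ j * ‖z j - xbar‖ ^ 2) ^ 2
        + 2 * ‖∑ j ∈ Finset.range (t + 1), θ j • (u j - g (z j))‖ ^ 2 := by
  set s := Finset.range (t + 1)
  set D := fderiv ℝ g xbar with hD
  set R : ℕ → EuclideanSpace ℝ (Fin q) := fun j => g (z j) - g xbar - D (z j - xbar) with hR
  have hz0 : ∑ j ∈ s, θ j • (z j - xbar) = 0 := by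
    simp only [smul_sub, Finset.sum_sub_distrib, ← Finset.sum_smul, hsum, one_smul, ← hxbar,
      sub_self]
  have key : g xbar - y = -((∑ j ∈ s, θ j • R j) + ∑ j ∈ s, θ j • (u j - g (z j))) := by
    have h1 : ∑ j ∈ s, θ j • g (z j)
        = (∑ j ∈ s, θ j • R j) + (∑ j ∈ s, θ j) • g xbar + D (∑ j ∈ s, θ j • (z j - xbar)) := by
      rw [map_sum, Finset.sum_smul, ← Finset.sum_add_distrib, ← Finset.sum_add_distrib]
      refine Finset.sum_congr rfl fun j _ => ?_
      rw [map_smul, ← smul_add, ← smul_add]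
      congr 1
      simp only [R, map_sub]
      abel
    have h2 : y = (∑ j ∈ s, θ j • (u j - g (z j))) + ∑ j ∈ s, θ j • g (z j) := by
      rw [hy]
      rw [← Finset.sum_add_distrib]
      refine Finset.sum_congr rfl fun j _ => ?_
      rw [← smul_add]
      congr 1
      abel
    rw [h2, h1, hz0, hsum, map_zero, one_smul]
    abel
  have hRb : ∀ j ∈ s, ‖R j‖ ≤ L / 2 * ‖z j - xbar‖ ^ 2 := fun j _ =>
    taylor_aux hL hg hLip xbar (z j)
  have hA : ‖∑ j ∈ s, θ j • R j‖ ≤ L / 2 * ∑ j ∈ s, θ j * ‖z j - xbar‖ ^ 2 := by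
    calc ‖∑ j ∈ s, θ j • R j‖ ≤ ∑ j ∈ s, ‖θ j • R j‖ := norm_sum_le _ _
      _ ≤ ∑ j ∈ s, θ j * (L / 2 * ‖z j - xbar‖ ^ 2) := by
          refine Finset.sum_le_sum fun j hj => ?_
          rw [norm_smul, Real.norm_eq_abs, abs_of_nonneg (hθ j hj)]
          exact mul_le_mul_of_nonneg_left (hRb j hj) (hθ j hj)
      _ = L / 2 * ∑ j ∈ s, θ j * ‖z j - xbar‖ ^ 2 := by
          rw [Finset.mul_sum]; exact Finset.sum_congr rfl fun j _ => by ring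
  have hnorm : ‖g xbar - y‖ ≤ ‖∑ j ∈ s, θ j • R j‖ + ‖∑ j ∈ s, θ j • (u j - g (z j))‖ := by
    rw [key, norm_neg]
    exact norm_add_le _ _
  have hDnn : 0 ≤ ∑ j ∈ s, θ j * ‖z j - xbar‖ ^ 2 :=
    Finset.sum_nonneg fun j hj => mul_nonneg (hθ j hj) (by positivity)
  set A := ‖∑ j ∈ s, θ j • R j‖
  set B := ‖∑ j ∈ s, θ j • (u j - g (z j))‖
  have hA0 : 0 ≤ A := norm_nonneg _
  have hB0 : 0 ≤ B := norm_nonneg _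
  have hg0 : 0 ≤ ‖g xbar - y‖ := norm_nonneg _
  nlinarith [sq_nonneg (A - B), sq_nonneg (‖g xbar - y‖ - (A + B)),
    mul_le_mul hA hA hA0 (by positivity : (0:ℝ) ≤ L / 2 * ∑ j ∈ s, θ j * ‖z j - xbar‖ ^ 2)]
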